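/- Every complete body C of diameter δ in H^d equals the intersection of all closed balls of radius δ centered at points of C. -/

import Mathlib

/- We formalize hyperbolic space `H^d` via the Beltrami–Klein model: the open
unit ball of `ℝ^d`, where hyperbolic geodesic segments are exactly Euclidean
segments (so hyperbolic convexity = Euclidean convexity), hyperplanes are
chords of affine hyperplanes, and the hyperbolic distance is given by the
Cayley–Klein formula `cosh d(x,y) = (1 - ⟪x,y⟫)/√((1-‖x‖²)(1-‖y‖²))`. -/

noncomputable section
open Metric Set RealInnerProductSpace

namespace Hyp

abbrev E (d : ℕ) := EuclideanSpace ℝ (Fin d)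

/-- The Klein model of `H^d`: the open unit ball. -/
def ball01 (d : ℕ) : Set (E d) := Metric.ball 0 1

/-- Inverse hyperbolic cosine. -/
def acosh (z : ℝ) : ℝ := Real.log (z + Real.sqrt (z ^ 2 - 1))

/-- Hyperbolic distance in the Beltrami–Klein model. -/
def hDist {d : ℕ} (x y : E d) : ℝ :=
  acosh ((1 - (inner ℝ x y : ℝ)) / (Real.sqrt (1 - ‖x‖ ^ 2) * Real.sqrt (1 - ‖y‖ ^ 2)))

/-- Hyperbolic diameter of a set. -/
def hDiam {d : ℕ} (C : Set (E d)) : ℝ :=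
  sSup {r | ∃ a ∈ C, ∃ b ∈ C, hDist a b = r}

/-- Hyperbolic (infimal) distance between two sets. -/
def hSetDist {d : ℕ} (A B : Set (E d)) : ℝ :=
  sInf {r | ∃ a ∈ A, ∃ b ∈ B, hDist a b = r}

/-- Hyperbolic distance from a point to a set. -/
def hPointDist {d : ℕ} (x : E d) (A : Set (E d)) : ℝ :=
  sInf {r | ∃ a ∈ A, hDist x a = r}

/-- Closed hyperbolic ball of radius `r` about `x`. -/
def hBall {d : ℕ} (x : E d) (r : ℝ) : Set (E d) :=
  {y ∈ ball01 d | hDist x y ≤ r}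

/-- A convex body in `H^d`: compact, convex (hyperbolically, i.e. in the Klein
model also Euclidean-convex), with nonempty interior, inside the model. -/
def IsBody {d : ℕ} (C : Set (E d)) : Prop :=
  IsCompact C ∧ Convex ℝ C ∧ (interior C).Nonempty ∧ C ⊆ ball01 d

/-- A hyperplane of `H^d` in the Klein model: a chord `{x ∈ B | ⟪u,x⟫ = c}` of
the unit ball, with `‖u‖ = 1` and `|c| < 1` (so the chord is nonempty). -/
structure HPlane (d : ℕ) where
  u : E d
  c : ℝ
  norm_u : ‖u‖ = 1
  abs_c : |c| < 1

/-- The underlying set of points of a hyperplane. -/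
def HPlane.carrier {d : ℕ} (H : HPlane d) : Set (E d) :=
  {x ∈ ball01 d | (inner ℝ H.u x : ℝ) = H.c}

/-- `H` supports `C`: they meet and `C` lies in the closed half-space
`⟪u,·⟫ ≤ c` (an orientation of the normal is chosen accordingly). -/
def Supports {d : ℕ} (H : HPlane d) (C : Set (E d)) : Prop :=
  (H.carrier ∩ C).Nonempty ∧ ∀ x ∈ C, (inner ℝ H.u x : ℝ) ≤ H.c

/-- Two hyperplanes are ultraparallel iff their closures (in `ℝ^d`, hence
including ideal boundary points) are disjoint. -/
def Ultraparallel {d : ℕ} (H K : HPlane d) : Prop :=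
  closure H.carrier ∩ closure K.carrier = ∅

/-- The width of `C` determined by a supporting hyperplane `H`: the distance
from `H` to a farthest ultraparallel supporting hyperplane of `C`. -/
def hwidth {d : ℕ} (C : Set (E d)) (H : HPlane d) : ℝ :=
  sSup {r | ∃ K : HPlane d, Ultraparallel H K ∧ Supports K C ∧
    r = hSetDist H.carrier K.carrier}

/-- Thickness: the minimum width over all supporting hyperplanes. -/
def thickness {d : ℕ} (C : Set (E d)) : ℝ :=
  sInf {r | ∃ H : HPlane d, Supports H C ∧ r = hwidth C H}

/-- A reduced body. -/
def IsReduced {d : ℕ} (R : Set (E d)) : Prop :=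
  IsBody R ∧ ∀ Z : Set (E d), IsBody Z → Z ⊆ R → Z ≠ R → thickness Z < thickness R

/-- The equidistant hypersurface to `H` at distance `t`, on the side
`⟪u,·⟫ < c` (the side on which supported bodies lie). -/
def equiSurf {d : ℕ} (H : HPlane d) (t : ℝ) : Set (E d) :=
  {x ∈ ball01 d | (inner ℝ H.u x : ℝ) < H.c ∧ hPointDist x H.carrier = t}

/-- The distance from `H` to the nearest equidistant hypersurface `E` to `H`
with `C ⊆ conv(H ∪ E)` (the thickness of the equidistant strip `conv(H ∪ E)`). -/
def equiLevel {d : ℕ} (C : Set (E d)) (H : HPlane d) : ℝ :=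
  sInf {t | 0 < t ∧ C ⊆ convexHull ℝ (H.carrier ∪ equiSurf H t)}

/-- `E_H(C)`: the nearest equidistant hypersurface to `H` such that `C` is
contained in the equidistant strip `conv(H ∪ E_H(C))`. -/
def EH {d : ℕ} (C : Set (E d)) (H : HPlane d) : Set (E d) :=
  equiSurf H (equiLevel C H)

/-- A body of constant width `δ`. -/
def ConstWidth {d : ℕ} (C : Set (E d)) (δ : ℝ) : Prop :=
  ∀ H : HPlane d, Supports H C → hwidth C H = δ

/-- A complete set of diameter `δ`: adding any point of `H^d` outside `C`
strictly increases the diameter. -/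
def IsComplete {d : ℕ} (C : Set (E d)) (δ : ℝ) : Prop :=
  hDiam C = δ ∧ ∀ x ∈ ball01 d, x ∉ C → hDiam (insert x C) > δ

/-- The circular arc `P_c(a,b)`: points `g` at hyperbolic distance `δ` from `c`
whose (hyperbolic = Euclidean, in the Klein model) segment to `c` meets the
segment `ab`. -/
def arcP {d : ℕ} (c a b : E d) (δ : ℝ) : Set (E d) :=
  {g ∈ ball01 d | hDist c g = δ ∧ (segment ℝ c g ∩ segment ℝ a b).Nonempty}

lemma acosh_le_log {z M : ℝ} (hz : 0 < z) (hzM : z ≤ M) :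
    acosh z ≤ Real.log (2 * M) := by
  unfold acosh
  have h1 : Real.sqrt (z ^ 2 - 1) ≤ z := by
    calc Real.sqrt (z ^ 2 - 1) ≤ Real.sqrt (z ^ 2) := Real.sqrt_le_sqrt (by nlinarith)
    _ = z := by rw [Real.sqrt_sq hz.le]
  exact Real.log_le_log (by nlinarith [Real.sqrt_nonneg (z ^ 2 - 1)]) (by linarith)

lemma hDist_le_bound {d : ℕ} {ρ : ℝ} (hρ0 : 0 ≤ ρ) (hρ : ρ < 1) {a b : E d}
    (ha : ‖a‖ ≤ ρ) (hb : ‖b‖ ≤ ρ) :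
    hDist a b ≤ Real.log (2 * (2 / (1 - ρ ^ 2))) := by
  have h1 : (0 : ℝ) < 1 - ρ ^ 2 := by nlinarith
  have hna : (0 : ℝ) ≤ ‖a‖ := norm_nonneg a
  have hnb : (0 : ℝ) ≤ ‖b‖ := norm_nonneg b
  have hab : |(inner ℝ a b : ℝ)| ≤ ρ ^ 2 := by
    calc |(inner ℝ a b : ℝ)| ≤ ‖a‖ * ‖b‖ := abs_real_inner_le_norm a b
    _ ≤ ρ ^ 2 := by nlinarith
  have habs := abs_le.mp hab
  have hDa : Real.sqrt (1 - ρ ^ 2) ≤ Real.sqrt (1 - ‖a‖ ^ 2) :=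
    Real.sqrt_le_sqrt (by nlinarith)
  have hDb : Real.sqrt (1 - ρ ^ 2) ≤ Real.sqrt (1 - ‖b‖ ^ 2) :=
    Real.sqrt_le_sqrt (by nlinarith)
  have hs0 : (0 : ℝ) < Real.sqrt (1 - ρ ^ 2) := Real.sqrt_pos.mpr h1
  have hD : 1 - ρ ^ 2 ≤ Real.sqrt (1 - ‖a‖ ^ 2) * Real.sqrt (1 - ‖b‖ ^ 2) := by
    calc 1 - ρ ^ 2 = Real.sqrt (1 - ρ ^ 2) * Real.sqrt (1 - ρ ^ 2) :=
          (Real.mul_self_sqrt h1.le).symm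
    _ ≤ Real.sqrt (1 - ‖a‖ ^ 2) * Real.sqrt (1 - ‖b‖ ^ 2) :=
          mul_le_mul hDa hDb hs0.le (le_trans hs0.le hDa)
  have hN2 : 1 - (inner ℝ a b : ℝ) ≤ 2 := by nlinarith
  have hN0 : 0 < 1 - (inner ℝ a b : ℝ) := by nlinarith
  have hz : 0 < (1 - (inner ℝ a b : ℝ)) /
      (Real.sqrt (1 - ‖a‖ ^ 2) * Real.sqrt (1 - ‖b‖ ^ 2)) :=
    div_pos hN0 (lt_of_lt_of_le h1 hD)
  have hzM : (1 - (inner ℝ a b : ℝ)) /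
      (Real.sqrt (1 - ‖a‖ ^ 2) * Real.sqrt (1 - ‖b‖ ^ 2)) ≤ 2 / (1 - ρ ^ 2) :=
    div_le_div₀ (by norm_num) hN2 h1 hD
  exact acosh_le_log hz hzM

lemma hDist_self {d : ℕ} {x : E d} (hx : ‖x‖ < 1) : hDist x x = 0 := by
  have h1 : (0 : ℝ) ≤ 1 - ‖x‖ ^ 2 := by nlinarith [norm_nonneg x]
  have : (inner ℝ x x : ℝ) = ‖x‖ ^ 2 := real_inner_self_eq_norm_sq x
  simp [hDist, this, Real.mul_self_sqrt h1, acosh]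
  rw [div_self (by nlinarith [norm_nonneg x] : (1 - ‖x‖ ^ 2) ≠ 0)]
  norm_num

lemma hDist_symm {d : ℕ} (x y : E d) : hDist x y = hDist y x := by
  simp [hDist, real_inner_comm x y, mul_comm]

lemma bddAbove_dists {d : ℕ} {K : Set (E d)} (hK : IsCompact K)
    (hKb : K ⊆ ball01 d) :
    BddAbove {r | ∃ a ∈ K, ∃ b ∈ K, hDist a b = r} := by
  rcases K.eq_empty_or_nonempty with h | hne
  · simp [h]
  obtain ⟨m, hm, hmax⟩ := hK.exists_isMaxOn hne continuous_norm.continuousOn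
  have hρ : ‖m‖ < 1 := by
    have := hKb hm
    simpa [ball01, mem_ball_zero_iff] using this
  refine ⟨Real.log (2 * (2 / (1 - ‖m‖ ^ 2))), ?_⟩
  rintro r ⟨a, ha, b, hb, rfl⟩
  exact hDist_le_bound (norm_nonneg m) hρ (hmax ha) (hmax hb)

/-- A complete body of diameter `δ` equals the intersection of all closed
balls of radius `δ` centered at its points. -/
theorem complete_eq_iInter_balls {d : ℕ} (C : Set (E d)) (hC : IsBody C)
    (δ : ℝ) (hcomp : IsComplete C δ) :
    C = ⋂ x ∈ C, hBall x δ := by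
  obtain ⟨hcpt, _, hint, hsub⟩ := hC
  have bdd : BddAbove {r | ∃ a ∈ C, ∃ b ∈ C, hDist a b = r} := bddAbove_dists hcpt hsub
  obtain ⟨x0, hx0i⟩ := hint
  have hx0 : x0 ∈ C := interior_subset hx0i
  have hx0n : ‖x0‖ < 1 := by simpa [ball01, mem_ball_zero_iff] using hsub hx0
  have hδ0 : 0 ≤ δ := by
    rw [← hcomp.1]
    exact le_csSup bdd ⟨x0, hx0, x0, hx0, hDist_self hx0n⟩
  ext y
  simp only [mem_iInter]
  constructor
  · intro hy x hx
    exact ⟨hsub hy, by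
      rw [← hcomp.1]
      exact le_csSup bdd ⟨x, hx, y, hy, rfl⟩⟩
  · intro hy
    have hyb : y ∈ ball01 d := (hy x0 hx0).1
    have hyn : ‖y‖ < 1 := by simpa [ball01, mem_ball_zero_iff] using hyb
    by_contra hyC
    have hgt := hcomp.2 y hyb hyC
    have hle : hDiam (insert y C) ≤ δ := by
      unfold hDiam
      apply csSup_le
      · exact ⟨0, y, mem_insert y C, y, mem_insert y C, hDist_self hyn⟩
      rintro r ⟨a, ha, b, hb, rfl⟩
      rcases ha with rfl | ha <;> rcases hb with rfl | hb
      · rw [hDist_self hyn]; exact hδ0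
      · rw [hDist_symm]; exact (hy b hb).2
      · exact (hy a ha).2
      · rw [← hcomp.1]; exact le_csSup bdd ⟨a, ha, b, hb, rfl⟩
    exact absurd hgt (not_lt.mpr hle)

end Hyp
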